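/- arXiv:1505.05304 — 6 statements merged into one kernel-verified Lean document; each statement's English description precedes it below -/
import Mathlib

section
/- Fix ξ ∈ ℝ² and ε > 0. Then there exist C > 0 and δ₀ ∈ (0,1) such that for all δ ∈ (0,δ₀), | ∫_{B_ε(ξ)} e^{w_{δ,ξ}(x)} w_{δ,ξ}(x) dx − 8π( log(8δ^{−2}) − 2 ) | ≤ C δ² |log δ|. Equivalently, ∫_{B_ε(ξ)} e^{w_{δ,ξ}} w_{δ,ξ} dx = 8π( log(8δ^{−2}) − 2 ) + O(δ² log δ) as δ → 0⁺. -/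
open MeasureTheory Real

/-- The Liouville bubble `w_{δ,ξ}(x) = log(8δ² / (δ² + |x−ξ|²)²)`. -/
noncomputable def bubble (δ : ℝ) (ξ : EuclideanSpace ℝ (Fin 2)) (x : EuclideanSpace ℝ (Fin 2)) : ℝ :=
  Real.log (8 * δ ^ 2 / (δ ^ 2 + ‖x - ξ‖ ^ 2) ^ 2)

/-- The radial profile of `e^w w`. -/
noncomputable def bg (δ r : ℝ) : ℝ :=
  8 * δ ^ 2 / (δ ^ 2 + r ^ 2) ^ 2 * Real.log (8 * δ ^ 2 / (δ ^ 2 + r ^ 2) ^ 2)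

/-- Truncated radial profile. -/
noncomputable def bh (ε δ t : ℝ) : ℝ := if t < ε then bg δ t else 0

/-- Explicit antiderivative of `r ↦ r * bg δ r`. -/
noncomputable def bG (δ r : ℝ) : ℝ :=
  δ ^ 2 * (8 - 4 * Real.log (8 * δ ^ 2) + 8 * Real.log (δ ^ 2 + r ^ 2)) / (δ ^ 2 + r ^ 2)

lemma bG_hasDeriv (δ : ℝ) (hδ : 0 < δ) (r : ℝ) :
    HasDerivAt (bG δ) (r * bg δ r) r := by
  have hu : 0 < δ ^ 2 + r ^ 2 := by positivity
  have h1 : HasDerivAt (fun r : ℝ => δ ^ 2 + r ^ 2) (2 * r) r := by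
    simpa using (hasDerivAt_pow 2 r).const_add (δ ^ 2)
  have hlog : HasDerivAt (fun r : ℝ => Real.log (δ ^ 2 + r ^ 2)) (2 * r / (δ ^ 2 + r ^ 2)) r :=
    h1.log hu.ne'
  have hN : HasDerivAt
      (fun r : ℝ => δ ^ 2 * (8 - 4 * Real.log (8 * δ ^ 2) + 8 * Real.log (δ ^ 2 + r ^ 2)))
      (δ ^ 2 * (8 * (2 * r / (δ ^ 2 + r ^ 2)))) r :=
    ((hlog.const_mul 8).const_add (8 - 4 * Real.log (8 * δ ^ 2))).const_mul (δ ^ 2)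
  have := hN.div h1 hu.ne'
  refine this.congr_deriv ?_
  unfold bg
  rw [Real.log_div (by positivity) (by positivity), Real.log_pow]
  field_simp
  ring

lemma bg_cont (δ : ℝ) (hδ : 0 < δ) : Continuous (fun r : ℝ => r * bg δ r) := by
  have hu : ∀ r : ℝ, (0:ℝ) < δ ^ 2 + r ^ 2 := fun r => by positivity
  have hc : Continuous (fun r : ℝ => 8 * δ ^ 2 / (δ ^ 2 + r ^ 2) ^ 2) := by
    apply Continuous.div continuous_const (by fun_prop)
    intro r; positivity
  have hne : ∀ r : ℝ, 8 * δ ^ 2 / (δ ^ 2 + r ^ 2) ^ 2 ≠ 0 := fun r => by positivity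
  exact continuous_id.mul (hc.mul (hc.log hne))

lemma vol_ball_one : (volume (Metric.ball (0 : EuclideanSpace ℝ (Fin 2)) 1)).toReal = π := by
  rw [EuclideanSpace.volume_ball]
  simp [Real.sq_sqrt Real.pi_pos.le]
  norm_num [Real.Gamma_two, ENNReal.toReal_ofReal Real.pi_pos.le]

set_option maxHeartbeats 2000000 in
/-- Fix `ξ ∈ ℝ²` and `ε > 0`. Then there are `C > 0` and `δ₀ ∈ (0,1)` such that for all
`δ ∈ (0,δ₀)`,
`|∫_{B_ε(ξ)} e^{w_{δ,ξ}} w_{δ,ξ} dx − 8π(log(8δ⁻²) − 2)| ≤ C δ² |log δ|`. -/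
theorem bubble_log_integral (ξ : EuclideanSpace ℝ (Fin 2)) (ε : ℝ) (hε : 0 < ε) :
    ∃ C : ℝ, 0 < C ∧ ∃ δ₀ : ℝ, 0 < δ₀ ∧ δ₀ < 1 ∧
      ∀ δ : ℝ, 0 < δ → δ < δ₀ →
        |(∫ x in Metric.ball ξ ε, Real.exp (bubble δ ξ x) * bubble δ ξ x)
            - 8 * Real.pi * (Real.log (8 * δ⁻¹ ^ 2) - 2)|
          ≤ C * δ ^ 2 * |Real.log δ| := by
  obtain ⟨M, hMdef⟩ : ∃ M : ℝ,
      M = |8 - 4 * Real.log 8| + 8 * (|Real.log (ε ^ 2)| + |Real.log (1 + ε ^ 2)|) := ⟨_, rfl⟩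
  have hM : 0 ≤ M := by rw [hMdef]; positivity
  have hl2 : (0:ℝ) < Real.log 2 := Real.log_pos (by norm_num)
  have hC : 0 < 2 * π / ε ^ 2 * (M / Real.log 2 + 8) + 1 := by
    have h1 : (0:ℝ) ≤ 2 * π / ε ^ 2 := by positivity
    have h2 : (0:ℝ) ≤ M / Real.log 2 + 8 := by
      have := div_nonneg hM hl2.le; linarith
    nlinarith
  refine ⟨2 * π / ε ^ 2 * (M / Real.log 2 + 8) + 1, hC, 1/2, by norm_num, by norm_num, ?_⟩
  intro δ hδ hδ2
  have hδ1 : δ < 1 := by linarith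
  -- Step 1: the integral equals 2π(G(ε) - G(0))
  have key : (∫ x in Metric.ball ξ ε, Real.exp (bubble δ ξ x) * bubble δ ξ x)
      = 2 * π * (bG δ ε - bG δ 0) := by
    have step1 : (∫ x in Metric.ball ξ ε, Real.exp (bubble δ ξ x) * bubble δ ξ x)
        = ∫ x : EuclideanSpace ℝ (Fin 2), bh ε δ ‖x - ξ‖ := by
      rw [← integral_indicator measurableSet_ball]
      congr 1
      funext x
      have hx : (0:ℝ) < 8 * δ ^ 2 / (δ ^ 2 + ‖x - ξ‖ ^ 2) ^ 2 := by positivity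
      by_cases h : x ∈ Metric.ball ξ ε
      · rw [Set.indicator_of_mem h]
        have h' : ‖x - ξ‖ < ε := by rwa [Metric.mem_ball, dist_eq_norm] at h
        rw [bh, if_pos h', bubble, bg, Real.exp_log hx]
      · rw [Set.indicator_of_notMem h]
        have h' : ¬ ‖x - ξ‖ < ε := by rwa [Metric.mem_ball, dist_eq_norm] at h
        rw [bh, if_neg h']
    have step2 : (∫ x : EuclideanSpace ℝ (Fin 2), bh ε δ ‖x - ξ‖)
        = ∫ x : EuclideanSpace ℝ (Fin 2), bh ε δ ‖x‖ :=
      integral_sub_right_eq_self (fun x => bh ε δ ‖x‖) ξ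
    have step3 : (∫ x : EuclideanSpace ℝ (Fin 2), bh ε δ ‖x‖)
        = 2 * (π * ∫ y in Set.Ioi (0:ℝ), y ^ 1 • bh ε δ y) := by
      rw [integral_fun_norm_addHaar volume (bh ε δ)]
      simp only [finrank_euclideanSpace_fin, measureReal_def, vol_ball_one, nsmul_eq_mul, smul_eq_mul]
      push_cast
      ring
    have step4 : (∫ y in Set.Ioi (0:ℝ), y ^ 1 • bh ε δ y)
        = ∫ r in (0:ℝ)..ε, r * bg δ r := by
      have : (fun y : ℝ => y ^ 1 • bh ε δ y)
          = fun y => Set.indicator (Set.Iio ε) (fun y => y * bg δ y) y := by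
        funext y
        by_cases h : y < ε
        · simp [bh, if_pos h, Set.indicator_of_mem (Set.mem_Iio.mpr h)]
        · simp [bh, if_neg h, Set.indicator_of_notMem (fun hc => h (Set.mem_Iio.mp hc))]
      rw [this, setIntegral_indicator measurableSet_Iio, Set.Ioi_inter_Iio,
        ← MeasureTheory.integral_Ioc_eq_integral_Ioo, ← intervalIntegral.integral_of_le hε.le]
    have step5 : (∫ r in (0:ℝ)..ε, r * bg δ r) = bG δ ε - bG δ 0 :=
      intervalIntegral.integral_eq_sub_of_hasDerivAt (fun r _ => bG_hasDeriv δ hδ r)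
        ((bg_cont δ hδ).intervalIntegrable 0 ε)
    rw [step1, step2, step3, step4, step5]; ring
  -- Step 2: the difference equals 2π * bG δ ε
  have h0 : bG δ 0 = 8 - 4 * Real.log 8 + 8 * Real.log δ := by
    have hδ2ne : (δ:ℝ) ^ 2 ≠ 0 := by positivity
    rw [bG]
    rw [show (0:ℝ) ^ 2 = 0 by norm_num, add_zero,
      Real.log_mul (by norm_num) hδ2ne, Real.log_pow]
    field_simp
    ring
  have hdiff : (∫ x in Metric.ball ξ ε, Real.exp (bubble δ ξ x) * bubble δ ξ x)
      - 8 * Real.pi * (Real.log (8 * δ⁻¹ ^ 2) - 2) = 2 * π * bG δ ε := by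
    rw [key, h0, Real.log_mul (by norm_num) (by positivity), Real.log_pow, Real.log_inv]
    push_cast
    ring
  rw [hdiff]
  -- Step 3: bound 2π * bG δ ε
  have hu : (0:ℝ) < δ ^ 2 + ε ^ 2 := by positivity
  obtain ⟨A, hAdef⟩ : ∃ A : ℝ,
      A = 8 - 4 * Real.log (8 * δ ^ 2) + 8 * Real.log (δ ^ 2 + ε ^ 2) := ⟨_, rfl⟩
  have hlog8 : Real.log (8 * δ ^ 2) = Real.log 8 + 2 * Real.log δ := by
    rw [Real.log_mul (by norm_num) (by positivity), Real.log_pow]; push_cast; ring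
  have t1 : |Real.log (δ ^ 2 + ε ^ 2)| ≤ |Real.log (ε ^ 2)| + |Real.log (1 + ε ^ 2)| := by
    have l1 : Real.log (ε ^ 2) ≤ Real.log (δ ^ 2 + ε ^ 2) :=
      Real.log_le_log (by positivity) (by nlinarith)
    have l2 : Real.log (δ ^ 2 + ε ^ 2) ≤ Real.log (1 + ε ^ 2) :=
      Real.log_le_log (by positivity) (by nlinarith)
    rw [abs_le]
    constructor
    · nlinarith [neg_abs_le (Real.log (ε ^ 2)), abs_nonneg (Real.log (1 + ε ^ 2))]
    · nlinarith [le_abs_self (Real.log (1 + ε ^ 2)), abs_nonneg (Real.log (ε ^ 2))]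
  have hA : |A| ≤ M + 8 * |Real.log δ| := by
    rw [hAdef, hlog8, hMdef, abs_le]
    constructor
    · nlinarith [neg_abs_le (8 - 4 * Real.log 8), neg_abs_le (Real.log δ),
        le_abs_self (Real.log δ), neg_abs_le (Real.log (δ ^ 2 + ε ^ 2)), t1]
    · nlinarith [le_abs_self (8 - 4 * Real.log 8), le_abs_self (Real.log δ),
        neg_abs_le (Real.log δ), le_abs_self (Real.log (δ ^ 2 + ε ^ 2)), t1]
  have hb : |bG δ ε| ≤ δ ^ 2 * (M + 8 * |Real.log δ|) / ε ^ 2 := by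
    have hbGε : bG δ ε = δ ^ 2 * A / (δ ^ 2 + ε ^ 2) := by rw [hAdef, bG]
    rw [hbGε, abs_div, abs_of_pos hu, abs_mul, abs_of_nonneg (sq_nonneg δ)]
    have h1 : δ ^ 2 * |A| ≤ δ ^ 2 * (M + 8 * |Real.log δ|) :=
      mul_le_mul_of_nonneg_left hA (sq_nonneg δ)
    have h2 : (0:ℝ) < ε ^ 2 := by positivity
    have h3 : ε ^ 2 ≤ δ ^ 2 + ε ^ 2 := by nlinarith [sq_nonneg δ]
    have h0 : (0:ℝ) ≤ δ ^ 2 * (M + 8 * |Real.log δ|) :=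
      mul_nonneg (sq_nonneg δ) (add_nonneg hM (by positivity))
    exact div_le_div₀ h0 h1 h2 h3
  -- |log δ| ≥ log 2
  have hld : Real.log 2 ≤ |Real.log δ| := by
    have hneg : Real.log δ < 0 := Real.log_neg hδ hδ1
    have : Real.log δ ≤ Real.log (1/2) := Real.log_le_log hδ (by linarith)
    rw [abs_of_neg hneg]
    rw [show (1:ℝ)/2 = 2⁻¹ by norm_num, Real.log_inv] at this
    linarith
  set L : ℝ := |Real.log δ| with hLdef
  have hL : 0 ≤ L := abs_nonneg _
  have hML : M + 8 * L ≤ (M / Real.log 2 + 8) * L := by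
    have h1 : M / Real.log 2 * Real.log 2 ≤ M / Real.log 2 * L :=
      mul_le_mul_of_nonneg_left hld (div_nonneg hM hl2.le)
    have h2 : M / Real.log 2 * Real.log 2 = M := by field_simp
    have h3 : (M / Real.log 2 + 8) * L = M / Real.log 2 * L + 8 * L := by ring
    linarith
  calc |2 * π * bG δ ε| = 2 * π * |bG δ ε| := by
        rw [abs_mul, abs_of_pos (by positivity : (0:ℝ) < 2 * π)]
    _ ≤ 2 * π * (δ ^ 2 * (M + 8 * L) / ε ^ 2) := by
        exact mul_le_mul_of_nonneg_left hb (by positivity)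
    _ = 2 * π / ε ^ 2 * δ ^ 2 * (M + 8 * L) := by field_simp
    _ ≤ 2 * π / ε ^ 2 * δ ^ 2 * ((M / Real.log 2 + 8) * L) :=
        mul_le_mul_of_nonneg_left hML (by positivity)
    _ ≤ (2 * π / ε ^ 2 * (M / Real.log 2 + 8) + 1) * δ ^ 2 * L := by
        have he : (2 * π / ε ^ 2 * (M / Real.log 2 + 8) + 1) * δ ^ 2 * L
            = 2 * π / ε ^ 2 * δ ^ 2 * ((M / Real.log 2 + 8) * L) + δ ^ 2 * L := by ring
        have hp : (0:ℝ) ≤ δ ^ 2 * L := mul_nonneg (sq_nonneg δ) hL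
        rw [he]; linarith
end

section
/- Fix ξ ∈ ℝ², ε > 0 and p with 1 ≤ p < 2. Then there exists C > 0 such that for all δ ∈ (0,1], ∫_{B_ε(ξ)} e^{p w_{δ,ξ}(x)} (δ² + |x−ξ|)^p dx ≤ C δ^{2−p}, where e^{p w_{δ,ξ}(x)} = 8^p δ^{2p} / (δ² + |x−ξ|²)^{2p}. -/
open MeasureTheory Real

/-- Fix `ξ ∈ ℝ²`, `ε > 0` and `1 ≤ p < 2`. Then there exists `C > 0` such that for all
`δ ∈ (0,1]`, `∫_{B_ε(ξ)} e^{p w_{δ,ξ}(x)} (δ² + |x−ξ|)^p dx ≤ C δ^{2−p}`. -/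
theorem bubble_Lp_estimate (ξ : EuclideanSpace ℝ (Fin 2)) (ε : ℝ) (hε : 0 < ε)
    (p : ℝ) (hp1 : 1 ≤ p) (hp2 : p < 2) :
    ∃ C : ℝ, 0 < C ∧ ∀ δ : ℝ, 0 < δ → δ ≤ 1 →
      (∫ x in Metric.ball ξ ε,
          Real.exp (p * bubble δ ξ x) * (δ ^ 2 + ‖x - ξ‖) ^ p)
        ≤ C * δ ^ (2 - p) := by
  have hp0 : (0:ℝ) < p := by linarith
  -- the fixed radial majorant profile
  set g : EuclideanSpace ℝ (Fin 2) → ℝ := fun y => (max 1 ‖y‖) ^ (-(3*p)) with hgdef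
  have hgpos : ∀ y, 0 < g y := fun y =>
    Real.rpow_pos_of_pos (lt_of_lt_of_le one_pos (le_max_left _ _)) _
  have hgcont : Continuous g :=
    (continuous_const.max continuous_norm).rpow_const fun y =>
      Or.inl (ne_of_gt (lt_of_lt_of_le one_pos (le_max_left _ _)))
  have hgint : Integrable g := by
    have hbig : Integrable (fun y : EuclideanSpace ℝ (Fin 2) =>
        (2:ℝ) ^ (3*p) * (1 + ‖y‖) ^ (-(3*p))) := by
      apply Integrable.const_mul
      apply integrable_one_add_norm (μ := volume)
      rw [finrank_euclideanSpace_fin]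
      push_cast; linarith
    refine hbig.mono' hgcont.aestronglyMeasurable ?_
    filter_upwards with y
    rw [Real.norm_of_nonneg (hgpos y).le]
    have hb : (0:ℝ) < 1 + ‖y‖ := by positivity
    have h2 : (1 + ‖y‖) / 2 ≤ max 1 ‖y‖ := by
      rcases le_total ‖y‖ 1 with h | h
      · rw [max_eq_left h]; linarith
      · rw [max_eq_right h]; linarith
    calc (max 1 ‖y‖) ^ (-(3*p)) ≤ ((1 + ‖y‖) / 2) ^ (-(3*p)) :=
          Real.rpow_le_rpow_of_nonpos (by positivity) h2 (by linarith)
      _ = (2:ℝ) ^ (3*p) * (1 + ‖y‖) ^ (-(3*p)) := by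
          rw [Real.div_rpow hb.le (by norm_num : (0:ℝ) ≤ 2), Real.rpow_neg hb.le,
            Real.rpow_neg (by norm_num : (0:ℝ) ≤ 2), div_eq_mul_inv, inv_inv]
          ring
  set J : ℝ := ∫ y, g y with hJdef
  have hJpos : 0 < J := by
    rw [hJdef, integral_pos_iff_support_of_nonneg (fun y => (hgpos y).le) hgint]
    have : Function.support g = Set.univ := Set.eq_univ_of_forall fun y => (hgpos y).ne'
    rw [this]
    simp [MeasureTheory.measure_univ_of_isAddLeftInvariant]
  refine ⟨16 ^ p * J, by positivity, fun δ hδ hδ1 => ?_⟩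
  -- the majorant
  set F : EuclideanSpace ℝ (Fin 2) → ℝ :=
    fun x => (16 ^ p * δ ^ (-p)) * g (δ⁻¹ • (x - ξ)) with hFdef
  have hFint : Integrable F := by
    apply Integrable.const_mul
    exact ((hgint.comp_smul (inv_ne_zero hδ.ne')).comp_sub_right ξ)
  have hFnn : ∀ x, 0 ≤ F x := fun x => by
    have := hgpos (δ⁻¹ • (x - ξ)); positivity
  -- pointwise bound
  have hptw : ∀ x, Real.exp (p * bubble δ ξ x) * (δ ^ 2 + ‖x - ξ‖) ^ p ≤ F x := by
    intro x
    set r : ℝ := ‖x - ξ‖ with hrdef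
    have hr : 0 ≤ r := norm_nonneg _
    set m : ℝ := max δ r with hmdef
    have hδm : δ ≤ m := le_max_left _ _
    have hrm : r ≤ m := le_max_right _ _
    have hmpos : 0 < m := lt_of_lt_of_le hδ hδm
    have hden : (0:ℝ) < δ^2 + r^2 := by positivity
    have ha : (0:ℝ) < 8 * δ^2 / (δ^2 + r^2)^2 := by positivity
    have hA : Real.exp (p * bubble δ ξ x) = (8 * δ^2 / (δ^2 + r^2)^2) ^ p := by
      rw [bubble, ← hrdef, Real.rpow_def_of_pos ha, mul_comm]
    have hB : (8 * δ^2 / (δ^2 + r^2)^2) ^ p * (δ^2 + r) ^ p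
        = ((8 * δ^2 / (δ^2 + r^2)^2) * (δ^2 + r)) ^ p :=
      (Real.mul_rpow ha.le (by positivity)).symm
    have hm2 : m^2 ≤ δ^2 + r^2 := by
      rcases max_cases δ r with ⟨h1, _⟩ | ⟨h1, _⟩ <;> rw [← hmdef] at h1 <;> nlinarith
    have hC : (8 * δ^2 / (δ^2 + r^2)^2) * (δ^2 + r) ≤ 16 * δ^2 / m^3 := by
      rw [div_mul_eq_mul_div, div_le_div_iff₀ (by positivity) (by positivity)]
      have h2m : δ^2 + r ≤ 2 * m := by nlinarith
      have hm4 : m^4 ≤ (δ^2 + r^2)^2 := by nlinarith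
      nlinarith [mul_le_mul_of_nonneg_left h2m (by positivity : (0:ℝ) ≤ 8*δ^2*m^3),
        mul_le_mul_of_nonneg_left hm4 (by positivity : (0:ℝ) ≤ 16*δ^2)]
    have hE : (16 * δ^2 / m^3) ^ p = F x := by
      have hnorm : ‖(δ:ℝ)⁻¹ • (x - ξ)‖ = r / δ := by
        rw [norm_smul, Real.norm_eq_abs, abs_inv, abs_of_pos hδ, inv_mul_eq_div, hrdef]
      have hmax : max 1 (r / δ) = m / δ := by
        rw [hmdef, ← max_div_div_right hδ.le δ r, div_self hδ.ne']
      have hgx : g (δ⁻¹ • (x - ξ)) = (m / δ) ^ (-(3*p)) := by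
        rw [hgdef]; simp only []; rw [hnorm, hmax]
      have hmd : (0:ℝ) < m / δ := by positivity
      rw [hFdef]; simp only []
      rw [hgx]
      rw [show (16 * δ^2 / m^3 : ℝ) = 16 * (δ⁻¹ * (δ / m)^3) by field_simp]
      rw [Real.mul_rpow (by norm_num) (by positivity),
        Real.mul_rpow (by positivity) (by positivity)]
      have h1 : ((δ / m) ^ (3:ℕ)) ^ p = (m / δ) ^ (-(3*p)) := by
        rw [← Real.rpow_natCast (δ/m) 3, ← Real.rpow_mul (by positivity)]
        rw [show (δ / m : ℝ) = (m / δ)⁻¹ by rw [inv_div]]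
        rw [Real.inv_rpow hmd.le, ← Real.rpow_neg hmd.le]
        norm_num
      rw [h1, Real.inv_rpow hδ.le, ← Real.rpow_neg hδ.le]
      ring
    calc Real.exp (p * bubble δ ξ x) * (δ ^ 2 + r) ^ p
        = ((8 * δ^2 / (δ^2 + r^2)^2) * (δ^2 + r)) ^ p := by rw [hA, hB]
      _ ≤ (16 * δ^2 / m^3) ^ p := Real.rpow_le_rpow (by positivity) hC hp0.le
      _ = F x := hE
  -- assemble
  have step1 : (∫ x in Metric.ball ξ ε,
      Real.exp (p * bubble δ ξ x) * (δ ^ 2 + ‖x - ξ‖) ^ p) ≤ ∫ x in Metric.ball ξ ε, F x := by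
    apply integral_mono_of_nonneg
    · filter_upwards with x; positivity
    · exact hFint.restrict
    · filter_upwards with x using hptw x
  have step2 : (∫ x in Metric.ball ξ ε, F x) ≤ ∫ x, F x :=
    setIntegral_le_integral hFint (Filter.Eventually.of_forall hFnn)
  have step3 : (∫ x, F x) = (16 ^ p * δ ^ (-p)) * (δ^2 * J) := by
    rw [hFdef]
    rw [MeasureTheory.integral_const_mul]
    congr 1
    have ht : (∫ x, g (δ⁻¹ • (x - ξ))) = ∫ x, g (δ⁻¹ • x) :=
      integral_sub_right_eq_self (fun x => g (δ⁻¹ • x)) ξ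
    rw [ht, Measure.integral_comp_smul volume g δ⁻¹, finrank_euclideanSpace_fin]
    rw [show ((δ⁻¹ : ℝ) ^ 2)⁻¹ = δ ^ 2 by rw [← inv_pow, inv_inv]]
    rw [abs_of_pos (by positivity), smul_eq_mul, hJdef]
  have final : (16 ^ p * δ ^ (-p)) * (δ^2 * J) = (16 ^ p * J) * δ ^ (2 - p) := by
    rw [Real.rpow_sub hδ, Real.rpow_neg hδ.le, Real.rpow_two, div_eq_mul_inv]
    ring
  linarith [step1, step2, step3.le, step3.ge, final.le, final.ge]
end

section
/- Fix ξ ∈ ℝ², ε > 0 and p with 1 < p < 2. Then there exists C > 0 such that for all δ ∈ (0,1], ∫_{B_ε(ξ)} e^{p w_{δ,ξ}(x)} (δ² + |x−ξ|²)^p dx ≤ C δ². -/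
open MeasureTheory Real

/-- Fix `ξ ∈ ℝ²`, `ε > 0` and `1 < p < 2`. Then there exists `C > 0` such that for all
`δ ∈ (0,1]`, `∫_{B_ε(ξ)} e^{p w_{δ,ξ}(x)} (δ² + |x−ξ|²)^p dx ≤ C δ²`. -/
theorem bubble_improved_Lp_estimate (ξ : EuclideanSpace ℝ (Fin 2)) (ε : ℝ) (hε : 0 < ε)
    (p : ℝ) (hp1 : 1 < p) (hp2 : p < 2) :
    ∃ C : ℝ, 0 < C ∧ ∀ δ : ℝ, 0 < δ → δ ≤ 1 →
      (∫ x in Metric.ball ξ ε,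
          Real.exp (p * bubble δ ξ x) * (δ ^ 2 + ‖x - ξ‖ ^ 2) ^ p)
        ≤ C * δ ^ 2 := by
  set f : EuclideanSpace ℝ (Fin 2) → ℝ := fun y => ((1 : ℝ) + ‖y‖ ^ 2) ^ (-p) with hf
  have hI : Integrable f := by
    have h := integrable_rpow_neg_one_add_norm_sq (E := EuclideanSpace ℝ (Fin 2))
      (μ := volume) (r := 2 * p)
      (by rw [finrank_euclideanSpace_fin]; push_cast; linarith)
    have heq : (-(2 * p) / 2) = -p := by ring
    rw [heq] at h
    exact h
  set I : ℝ := ∫ y, f y with hIdef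
  have hInn : 0 ≤ I := integral_nonneg fun y => by positivity
  refine ⟨(8 : ℝ) ^ p * (I + 1), by positivity, fun δ hδ hδ1 => ?_⟩
  have hδne : δ ≠ 0 := ne_of_gt hδ
  -- pointwise identity
  have key : ∀ x : EuclideanSpace ℝ (Fin 2),
      Real.exp (p * bubble δ ξ x) * (δ ^ 2 + ‖x - ξ‖ ^ 2) ^ p
      = (8 : ℝ) ^ p * f (δ⁻¹ • (x - ξ)) := by
    intro x
    have ha : (0 : ℝ) < δ ^ 2 + ‖x - ξ‖ ^ 2 := by positivity
    set a : ℝ := δ ^ 2 + ‖x - ξ‖ ^ 2 with hadef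
    have h8 : (0 : ℝ) < 8 * δ ^ 2 / a ^ 2 := by positivity
    have hexp : Real.exp (p * bubble δ ξ x) = (8 * δ ^ 2 / a ^ 2) ^ p := by
      rw [bubble, Real.rpow_def_of_pos h8, mul_comm]
    have hnorm : ‖δ⁻¹ • (x - ξ)‖ ^ 2 = δ⁻¹ ^ 2 * ‖x - ξ‖ ^ 2 := by
      rw [norm_smul, mul_pow, Real.norm_eq_abs, sq_abs]
    have hfval : f (δ⁻¹ • (x - ξ)) = (a / δ ^ 2) ^ (-p) := by
      show ((1 : ℝ) + ‖δ⁻¹ • (x - ξ)‖ ^ 2) ^ (-p) = (a / δ ^ 2) ^ (-p)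
      congr 1
      rw [hnorm, hadef]
      field_simp
    have hdiv : (0 : ℝ) < a / δ ^ 2 := by positivity
    rw [hexp, hfval, Real.rpow_neg hdiv.le, ← Real.inv_rpow hdiv.le, inv_div]
    rw [← Real.mul_rpow h8.le ha.le, ← Real.mul_rpow (by norm_num) (by positivity)]
    congr 1
    field_simp
  -- integrability of the majorant
  have hint : Integrable (fun x : EuclideanSpace ℝ (Fin 2) =>
      (8 : ℝ) ^ p * f (δ⁻¹ • (x - ξ))) := by
    have h1 : Integrable (fun x : EuclideanSpace ℝ (Fin 2) => f (δ⁻¹ • x)) :=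
      (integrable_comp_smul_iff (volume : Measure (EuclideanSpace ℝ (Fin 2))) f
        (inv_ne_zero hδne)).mpr hI
    exact (h1.comp_sub_right ξ).const_mul _
  have hnonneg : 0 ≤ᵐ[volume] fun x : EuclideanSpace ℝ (Fin 2) =>
      (8 : ℝ) ^ p * f (δ⁻¹ • (x - ξ)) :=
    Filter.Eventually.of_forall fun x => by positivity
  calc (∫ x in Metric.ball ξ ε,
          Real.exp (p * bubble δ ξ x) * (δ ^ 2 + ‖x - ξ‖ ^ 2) ^ p)
      = ∫ x in Metric.ball ξ ε, (8 : ℝ) ^ p * f (δ⁻¹ • (x - ξ)) :=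
        setIntegral_congr_fun measurableSet_ball fun x _ => key x
    _ ≤ ∫ x : EuclideanSpace ℝ (Fin 2), (8 : ℝ) ^ p * f (δ⁻¹ • (x - ξ)) :=
        setIntegral_le_integral hint hnonneg
    _ = (8 : ℝ) ^ p * ∫ x : EuclideanSpace ℝ (Fin 2), f (δ⁻¹ • (x - ξ)) :=
        integral_const_mul _ _
    _ = (8 : ℝ) ^ p * ∫ x : EuclideanSpace ℝ (Fin 2), f (δ⁻¹ • x) := by
        rw [integral_sub_right_eq_self (fun x : EuclideanSpace ℝ (Fin 2) => f (δ⁻¹ • x)) ξ]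
    _ = (8 : ℝ) ^ p *
          (|(δ⁻¹ ^ Module.finrank ℝ (EuclideanSpace ℝ (Fin 2)))⁻¹| * I) := by
        rw [Measure.integral_comp_smul (volume : Measure (EuclideanSpace ℝ (Fin 2))) f δ⁻¹,
          smul_eq_mul, hIdef]
    _ ≤ (8 : ℝ) ^ p * (I + 1) * δ ^ 2 := by
        rw [finrank_euclideanSpace_fin]
        have habs : |((δ⁻¹) ^ 2)⁻¹| = δ ^ 2 := by
          rw [abs_of_nonneg (by positivity)]
          field_simp
        rw [habs]
        have h8p : (0 : ℝ) < (8 : ℝ) ^ p := by positivity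
        nlinarith [mul_pos hδ hδ]
end

section
/- Fix ξ ∈ ℝ², ε > 0 and M > 0. Then there exists C > 0 such that the following holds for every δ ∈ (0,1]: for every measurable function g : B_ε(ξ) → ℝ satisfying |g(x)| ≤ M(δ² + |x−ξ|) for all x ∈ B_ε(ξ), one has | ∫_{B_ε(ξ)} e^{w_{δ,ξ}(x) + g(x)} dx − 8π | ≤ C δ. -/
open MeasureTheory Real

lemma abs_exp_sub_one_le' (t : ℝ) : |Real.exp t - 1| ≤ |t| * Real.exp |t| := by
  rcases abs_cases t with ⟨h1, h2⟩ | ⟨h1, h2⟩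
  · rw [h1, abs_of_nonneg (sub_nonneg.mpr (Real.one_le_exp h2))]
    have hA := Real.add_one_le_exp (-t)
    have hB : Real.exp (-t) * Real.exp t = 1 := by rw [← Real.exp_add]; simp
    have hC := Real.exp_pos t
    nlinarith
  · rw [h1, abs_of_nonpos (sub_nonpos.mpr (Real.exp_le_one_iff.mpr h2.le))]
    have hA := Real.add_one_le_exp t
    have hB := Real.one_le_exp (neg_nonneg.mpr h2.le)
    nlinarith


lemma radial_ball (ξ : EuclideanSpace ℝ (Fin 2)) (ε : ℝ) (f : ℝ → ℝ) :
    ∫ x in Metric.ball ξ ε, f ‖x - ξ‖ = 2 * π * ∫ r in Set.Ioo 0 ε, r * f r := by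
  set f' : ℝ → ℝ := (Set.Iio ε).indicator f with hf'
  have h1 : ∫ x in Metric.ball ξ ε, f ‖x - ξ‖ = ∫ x, f' ‖x - ξ‖ := by
    rw [← integral_indicator measurableSet_ball]
    refine integral_congr_ae (Filter.Eventually.of_forall fun x => ?_)
    have hmem : x ∈ Metric.ball ξ ε ↔ ‖x - ξ‖ ∈ Set.Iio ε := by
      rw [Set.mem_Iio, ← dist_eq_norm, Metric.mem_ball]
    by_cases hx : x ∈ Metric.ball ξ ε
    · show _ = f' ‖x - ξ‖
      rw [Set.indicator_of_mem hx, hf', Set.indicator_of_mem (hmem.mp hx)]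
    · show _ = f' ‖x - ξ‖
      rw [Set.indicator_of_notMem hx, hf',
        Set.indicator_of_notMem (fun h => hx (hmem.mpr h))]
  have h2 : ∫ x, f' ‖x - ξ‖ = ∫ x : EuclideanSpace ℝ (Fin 2), f' ‖x‖ := by
    have := integral_add_right_eq_self (μ := volume) (fun y : EuclideanSpace ℝ (Fin 2) => f' ‖y‖) (-ξ)
    simpa [sub_eq_add_neg] using this
  rw [h1, h2, integral_fun_norm_addHaar volume f']
  have hdim : Module.finrank ℝ (EuclideanSpace ℝ (Fin 2)) = 2 := by
    simp [finrank_euclideanSpace]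
  have hvol : (volume (Metric.ball (0 : EuclideanSpace ℝ (Fin 2)) 1)).toReal = π := by
    rw [EuclideanSpace.volume_ball]
    simp only [Fintype.card_fin]
    norm_num
    exact Real.sq_sqrt pi_nonneg
  rw [hdim, measureReal_def, hvol]
  have h3 : ∫ y in Set.Ioi (0:ℝ), y ^ (2-1) • f' y = ∫ r in Set.Ioo 0 ε, r * f r := by
    have : ∀ y : ℝ, y ^ (2-1 : ℕ) • f' y = (Set.Iio ε).indicator (fun r => r * f r) y := by
      intro y
      by_cases hy : y ∈ Set.Iio ε
      · simp [hf', Set.indicator_of_mem hy]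
      · simp [hf', Set.indicator_of_notMem hy]
    simp_rw [this]
    rw [setIntegral_indicator measurableSet_Iio, Set.Ioi_inter_Iio]
  rw [h3, nsmul_eq_mul, smul_eq_mul]
  ring

lemma denom_pos (δ r : ℝ) (hδ : 0 < δ) : 0 < δ^2 + r^2 := by positivity

lemma int_main (δ ε : ℝ) (hδ : 0 < δ) (hε : 0 ≤ ε) :
    ∫ r in Set.Ioo 0 ε, r * (8*δ^2/(δ^2+r^2)^2) = 4*ε^2/(δ^2+ε^2) := by
  have hcont : Continuous (fun r : ℝ => r * (8*δ^2/(δ^2+r^2)^2)) := by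
    apply continuous_id.mul
    exact continuous_const.div (by fun_prop) (fun r => by positivity)
  have hderiv : ∀ r ∈ Set.uIcc (0:ℝ) ε,
      HasDerivAt (fun r : ℝ => -(4*δ^2)/(δ^2+r^2)) (r * (8*δ^2/(δ^2+r^2)^2)) r := by
    intro r _
    have h1 : HasDerivAt (fun r : ℝ => δ^2 + r^2) (2*r) r := by
      simpa using (hasDerivAt_pow 2 r).const_add (δ^2)
    have h2 := (h1.inv (by positivity)).const_mul (-(4*δ^2))
    simp only [div_eq_mul_inv]
    refine h2.congr_deriv ?_
    ring
  rw [← integral_Ioc_eq_integral_Ioo, ← intervalIntegral.integral_of_le hε,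
    intervalIntegral.integral_eq_sub_of_hasDerivAt hderiv (hcont.intervalIntegrable 0 ε)]
  have h0 : δ^2 + ε^2 > 0 := by positivity
  field_simp
  ring

lemma int_sq_bound (δ ε : ℝ) (hδ : 0 < δ) (hε : 0 ≤ ε) :
    ∫ r in Set.Ioo 0 ε, r * (8*δ^2/(δ^2+r^2)^2 * r) ≤ 4 * π * δ := by
  have hcont : Continuous (fun r : ℝ => r * (8*δ^2/(δ^2+r^2)^2 * r)) := by
    apply continuous_id.mul
    apply Continuous.mul _ continuous_id
    exact continuous_const.div (by fun_prop) (fun r => by positivity)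
  have hcont2 : Continuous (fun r : ℝ => 8*δ^2/(δ^2+r^2)) :=
    continuous_const.div (by fun_prop) (fun r => by positivity)
  have hle : ∫ r in Set.Ioo 0 ε, r * (8*δ^2/(δ^2+r^2)^2 * r)
      ≤ ∫ r in Set.Ioo 0 ε, 8*δ^2/(δ^2+r^2) := by
    apply setIntegral_mono_on
    · exact (hcont.integrableOn_Icc (a := 0) (b := ε)).mono_set Set.Ioo_subset_Icc_self
    · exact (hcont2.integrableOn_Icc (a := 0) (b := ε)).mono_set Set.Ioo_subset_Icc_self
    · exact measurableSet_Ioo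
    · intro r hr
      have h1 : 0 < δ^2 + r^2 := by positivity
      have key : r * (8*δ^2/(δ^2+r^2)^2 * r) = 8*δ^2*r^2/(δ^2+r^2)^2 := by ring
      rw [key, div_le_div_iff₀ (by positivity) h1]
      nlinarith [mul_pos (mul_pos (pow_pos hδ 2) (pow_pos hδ 2)) h1]
  have harct : ∫ r in Set.Ioo 0 ε, 8*δ^2/(δ^2+r^2) = 8*δ*Real.arctan (ε/δ) := by
    have hderiv : ∀ r ∈ Set.uIcc (0:ℝ) ε,
        HasDerivAt (fun r : ℝ => 8*δ*Real.arctan (r/δ)) (8*δ^2/(δ^2+r^2)) r := by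
      intro r _
      have h1 : HasDerivAt (fun r : ℝ => r/δ) (1/δ) r := by
        simpa using (hasDerivAt_id r).div_const δ
      have h2 := ((Real.hasDerivAt_arctan (r/δ)).comp r h1).const_mul (8*δ)
      refine h2.congr_deriv ?_
      field_simp
    rw [← integral_Ioc_eq_integral_Ioo, ← intervalIntegral.integral_of_le hε,
      intervalIntegral.integral_eq_sub_of_hasDerivAt hderiv (hcont2.intervalIntegrable 0 ε)]
    simp
  calc _ ≤ 8*δ*Real.arctan (ε/δ) := by rw [← harct]; exact hle
    _ ≤ 8*δ*(π/2) := by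
        have := (Real.arctan_lt_pi_div_two (ε/δ)).le
        nlinarith
    _ = 4*π*δ := by ring


/-- Fix `ξ ∈ ℝ²`, `ε > 0`, `M > 0`. Then there is `C > 0` such that for every `δ ∈ (0,1]`
and every measurable `g` with `|g(x)| ≤ M(δ² + |x−ξ|)` on `B_ε(ξ)`, one has
`|∫_{B_ε(ξ)} e^{w_{δ,ξ}(x) + g(x)} dx − 8π| ≤ C δ`. -/
theorem bubble_perturbed_mass (ξ : EuclideanSpace ℝ (Fin 2)) (ε : ℝ) (hε : 0 < ε)
    (M : ℝ) (hM : 0 < M) :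
    ∃ C : ℝ, 0 < C ∧ ∀ δ : ℝ, 0 < δ → δ ≤ 1 →
      ∀ g : EuclideanSpace ℝ (Fin 2) → ℝ, Measurable g →
        (∀ x ∈ Metric.ball ξ ε, |g x| ≤ M * (δ ^ 2 + ‖x - ξ‖)) →
        |(∫ x in Metric.ball ξ ε, Real.exp (bubble δ ξ x + g x)) - 8 * Real.pi| ≤ C * δ := by
  set K := Real.exp (M * (1 + ε)) with hK
  have hKpos : 0 < K := Real.exp_pos _
  refine ⟨M * K * (8 * π + 8 * π ^ 2) + 8 * π / ε ^ 2, by positivity, ?_⟩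
  intro δ hδ hδ1 g hg hgb
  have hδsq : δ ^ 2 ≤ 1 := by nlinarith
  set w : EuclideanSpace ℝ (Fin 2) → ℝ := fun x => 8 * δ ^ 2 / (δ ^ 2 + ‖x - ξ‖ ^ 2) ^ 2 with hw
  have hwpos : ∀ x, 0 < w x := fun x => by positivity
  have hwle : ∀ x, w x ≤ 8 / δ ^ 2 := by
    intro x
    rw [hw, div_le_div_iff₀ (by positivity) (by positivity)]
    nlinarith [sq_nonneg ‖x - ξ‖, sq_nonneg δ, sq_nonneg (δ * ‖x - ξ‖), pow_pos hδ 2]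
  have hwcont : Continuous w :=
    continuous_const.div (by fun_prop) (fun x => by positivity)
  have hball : volume (Metric.ball ξ ε) ≠ ⊤ := measure_ball_lt_top.ne
  -- pointwise rewrite of the integrand
  have hrw : ∀ x, Real.exp (bubble δ ξ x + g x) = w x * Real.exp (g x) := by
    intro x
    rw [Real.exp_add, bubble, Real.exp_log (hwpos x)]
  rw [show (∫ x in Metric.ball ξ ε, Real.exp (bubble δ ξ x + g x))
      = ∫ x in Metric.ball ξ ε, w x * Real.exp (g x) from
    integral_congr_ae (Filter.Eventually.of_forall fun x => hrw x)]
  -- bound on exp(g) on the ball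
  have hgball : ∀ x ∈ Metric.ball ξ ε, Real.exp (g x) ≤ K := by
    intro x hx
    have hxε : ‖x - ξ‖ < ε := by rwa [← dist_eq_norm, ← Metric.mem_ball]
    have h1 : g x ≤ M * (1 + ε) := by
      have := hgb x hx
      have h2 : g x ≤ |g x| := le_abs_self _
      nlinarith [norm_nonneg (x - ξ), hM.le]
    exact Real.exp_le_exp.mpr h1
  -- integrabilities
  have hI1 : IntegrableOn (fun x => w x * Real.exp (g x)) (Metric.ball ξ ε) := by
    refine Measure.integrableOn_of_bounded (M := 8 / δ ^ 2 * K) hball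
      ((hwcont.measurable.mul (Real.measurable_exp.comp hg))).aestronglyMeasurable ?_
    · filter_upwards [ae_restrict_mem measurableSet_ball] with x hx
      rw [Real.norm_eq_abs, abs_of_nonneg (by positivity)]
      exact mul_le_mul (hwle x) (hgball x hx) (Real.exp_nonneg _) (by positivity)
  have hI2 : IntegrableOn w (Metric.ball ξ ε) := by
    refine Measure.integrableOn_of_bounded (M := 8 / δ ^ 2) hball
      hwcont.aestronglyMeasurable ?_
    · filter_upwards with x
      rw [Real.norm_eq_abs, abs_of_nonneg (hwpos x).le]
      exact hwle x
  have hI4 : IntegrableOn (fun x => w x * ‖x - ξ‖) (Metric.ball ξ ε) := by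
    refine Measure.integrableOn_of_bounded (M := 8 / δ ^ 2 * ε) hball
      (hwcont.mul ((continuous_id.sub continuous_const).norm)).aestronglyMeasurable ?_
    · filter_upwards [ae_restrict_mem measurableSet_ball] with x hx
      have hxε : ‖x - ξ‖ < ε := by rwa [← dist_eq_norm, ← Metric.mem_ball]
      rw [Real.norm_eq_abs, abs_of_nonneg (by positivity)]
      exact mul_le_mul (hwle x) hxε.le (norm_nonneg _) (by positivity)
  have hI3 : IntegrableOn (fun x => w x * (δ ^ 2 + ‖x - ξ‖)) (Metric.ball ξ ε) := by
    have : (fun x => w x * (δ ^ 2 + ‖x - ξ‖))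
        = fun x => w x * δ ^ 2 + w x * ‖x - ξ‖ := by ext x; ring
    rw [this]
    exact (hI2.mul_const _).add hI4
  -- radial evaluations
  have hw_int : ∫ x in Metric.ball ξ ε, w x = 2 * π * (4 * ε ^ 2 / (δ ^ 2 + ε ^ 2)) := by
    have h := radial_ball ξ ε (fun r => 8 * δ ^ 2 / (δ ^ 2 + r ^ 2) ^ 2)
    rw [hw, h, int_main δ ε hδ hε.le]
  have hwr_int : ∫ x in Metric.ball ξ ε, w x * ‖x - ξ‖ ≤ 8 * π ^ 2 * δ := by
    have h := radial_ball ξ ε (fun r => 8 * δ ^ 2 / (δ ^ 2 + r ^ 2) ^ 2 * r)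
    rw [hw]
    calc (∫ x in Metric.ball ξ ε, 8 * δ ^ 2 / (δ ^ 2 + ‖x - ξ‖ ^ 2) ^ 2 * ‖x - ξ‖)
        = 2 * π * ∫ r in Set.Ioo 0 ε, r * (8 * δ ^ 2 / (δ ^ 2 + r ^ 2) ^ 2 * r) := h
      _ ≤ 2 * π * (4 * π * δ) := by
          have := int_sq_bound δ ε hδ hε.le
          nlinarith [pi_pos]
      _ = 8 * π ^ 2 * δ := by ring
  have hw_int_le : ∫ x in Metric.ball ξ ε, w x ≤ 8 * π := by
    rw [hw_int]
    have h1 : 4 * ε ^ 2 / (δ ^ 2 + ε ^ 2) ≤ 4 := by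
      rw [div_le_iff₀ (by positivity)]
      nlinarith [sq_nonneg δ]
    nlinarith [pi_pos]
  -- term T1
  have hT1 : |(∫ x in Metric.ball ξ ε, w x * Real.exp (g x)) - ∫ x in Metric.ball ξ ε, w x|
      ≤ M * K * (8 * π + 8 * π ^ 2) * δ := by
    rw [← integral_sub hI1 hI2]
    have hstep : |∫ x in Metric.ball ξ ε, (w x * Real.exp (g x) - w x)|
        ≤ ∫ x in Metric.ball ξ ε, |w x * Real.exp (g x) - w x| := by
      simpa [Real.norm_eq_abs] using
        norm_integral_le_integral_norm (μ := volume.restrict (Metric.ball ξ ε))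
          (fun x => w x * Real.exp (g x) - w x)
    refine hstep.trans ?_
    have hmono : ∫ x in Metric.ball ξ ε, |w x * Real.exp (g x) - w x|
        ≤ ∫ x in Metric.ball ξ ε, M * K * (w x * (δ ^ 2 + ‖x - ξ‖)) := by
      apply setIntegral_mono_on ((hI1.sub hI2).abs) (hI3.const_mul _) measurableSet_ball
      intro x hx
      simp only [Pi.sub_apply]
      have hxε : ‖x - ξ‖ < ε := by rwa [← dist_eq_norm, ← Metric.mem_ball]
      have hb2 : |g x| ≤ M * (δ ^ 2 + ‖x - ξ‖) := hgb x hx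
      have hb3 : Real.exp |g x| ≤ K := by
        apply Real.exp_le_exp.mpr
        refine hb2.trans ?_
        nlinarith [norm_nonneg (x - ξ), hM.le]
      have hb1 := abs_exp_sub_one_le' (g x)
      have key : |w x * Real.exp (g x) - w x| = w x * |Real.exp (g x) - 1| := by
        rw [show w x * Real.exp (g x) - w x = w x * (Real.exp (g x) - 1) by ring,
          abs_mul, abs_of_nonneg (hwpos x).le]
      rw [key]
      calc w x * |Real.exp (g x) - 1| ≤ w x * (|g x| * Real.exp |g x|) :=
            mul_le_mul_of_nonneg_left hb1 (hwpos x).le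
        _ ≤ w x * (M * (δ ^ 2 + ‖x - ξ‖) * K) := by
            apply mul_le_mul_of_nonneg_left _ (hwpos x).le
            exact mul_le_mul hb2 hb3 (Real.exp_nonneg _) (by positivity)
        _ = M * K * (w x * (δ ^ 2 + ‖x - ξ‖)) := by ring
    refine hmono.trans ?_
    rw [integral_const_mul]
    have hsplit : ∫ x in Metric.ball ξ ε, w x * (δ ^ 2 + ‖x - ξ‖)
        = (∫ x in Metric.ball ξ ε, w x) * δ ^ 2 + ∫ x in Metric.ball ξ ε, w x * ‖x - ξ‖ := by
      rw [← integral_mul_const, ← integral_add (hI2.mul_const _) hI4]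
      congr 1; ext x; ring
    rw [hsplit]
    have h1 : (∫ x in Metric.ball ξ ε, w x) * δ ^ 2 ≤ 8 * π * δ := by
      have h2 : (∫ x in Metric.ball ξ ε, w x) * δ ^ 2 ≤ 8 * π * δ ^ 2 :=
        mul_le_mul_of_nonneg_right hw_int_le (by positivity)
      nlinarith [pi_pos, mul_nonneg (mul_nonneg pi_pos.le hδ.le) (sub_nonneg.mpr hδ1)]
    have hfin := mul_le_mul_of_nonneg_left (add_le_add h1 hwr_int)
      (mul_nonneg hM.le hKpos.le)
    nlinarith [hfin]
  -- term T2
  have hT2 : |(∫ x in Metric.ball ξ ε, w x) - 8 * π| ≤ 8 * π / ε ^ 2 * δ := by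
    rw [hw_int]
    have e1 : 2 * π * (4 * ε ^ 2 / (δ ^ 2 + ε ^ 2)) - 8 * π
        = -(8 * π * δ ^ 2 / (δ ^ 2 + ε ^ 2)) := by
      field_simp
      ring
    rw [e1, abs_neg, abs_of_nonneg (by positivity)]
    rw [div_le_iff₀ (by positivity), div_mul_eq_mul_div, div_mul_eq_mul_div,
      le_div_iff₀ (by positivity)]
    nlinarith [mul_nonneg (mul_nonneg (mul_nonneg pi_pos.le hδ.le) (sub_nonneg.mpr hδ1))
        (sq_nonneg ε), mul_nonneg (mul_nonneg pi_pos.le hδ.le) (sq_nonneg δ), pi_pos]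
  calc |(∫ x in Metric.ball ξ ε, w x * Real.exp (g x)) - 8 * π|
      ≤ |(∫ x in Metric.ball ξ ε, w x * Real.exp (g x)) - ∫ x in Metric.ball ξ ε, w x|
        + |(∫ x in Metric.ball ξ ε, w x) - 8 * π| := abs_sub_le _ _ _
    _ ≤ M * K * (8 * π + 8 * π ^ 2) * δ + 8 * π / ε ^ 2 * δ := add_le_add hT1 hT2
    _ = (M * K * (8 * π + 8 * π ^ 2) + 8 * π / ε ^ 2) * δ := by ring
end

section
/- Fix ξ ∈ ℝ², ε > 0 and c ∈ ℝ. Then there exist C > 0 and δ₀ ∈ (0,1) such that for all δ ∈ (0,δ₀), | ∫_{B_ε(ξ)} e^{w_{δ,ξ}(x)} ( w_{δ,ξ}(x) − log(8δ²) + c ) dx − 8π( −2 log(δ²) + c − 2 ) | ≤ C δ² |log δ|. -/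
open MeasureTheory Real

lemma vol_unit_ball' : volume (Metric.ball (0 : EuclideanSpace ℝ (Fin 2)) 1) = .ofReal π := by
  rw [EuclideanSpace.volume_ball]
  norm_num [Real.sq_sqrt Real.pi_nonneg, Real.Gamma_two]

lemma radial_integral (ξ : EuclideanSpace ℝ (Fin 2)) (ε : ℝ) (g : ℝ → ℝ) :
    ∫ x in Metric.ball ξ ε, g ‖x - ξ‖ = 2 * π * ∫ y in Set.Ioo 0 ε, y * g y := by
  rw [← integral_indicator measurableSet_ball]
  have h1 : (Metric.ball ξ ε).indicator (fun x => g ‖x - ξ‖)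
      = fun x => (Set.Iio ε).indicator g ‖x - ξ‖ := by
    funext x
    by_cases h : ‖x - ξ‖ < ε <;>
      simp [Set.indicator, Metric.mem_ball, dist_eq_norm, h]
  rw [h1]
  have h2 : ∫ x : EuclideanSpace ℝ (Fin 2), (Set.Iio ε).indicator g ‖x - ξ‖
      = ∫ x : EuclideanSpace ℝ (Fin 2), (Set.Iio ε).indicator g ‖x‖ :=
    integral_sub_right_eq_self (fun x => (Set.Iio ε).indicator g ‖x‖) ξ
  rw [h2, integral_fun_norm_addHaar volume ((Set.Iio ε).indicator g)]
  have hd : Module.finrank ℝ (EuclideanSpace ℝ (Fin 2)) = 2 := by simp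
  rw [hd, measureReal_def, vol_unit_ball']
  have h3 : ∀ y : ℝ, y ^ (2 - 1) • (Set.Iio ε).indicator g y
      = (Set.Iio ε).indicator (fun y => y * g y) y := by
    intro y
    by_cases h : y ∈ Set.Iio ε <;> simp [Set.indicator, h]
  simp only [h3]
  rw [setIntegral_indicator measurableSet_Iio, Set.Ioi_inter_Iio]
  rw [ENNReal.toReal_ofReal Real.pi_nonneg]
  simp [smul_eq_mul]
  ring

lemma hasDeriv_F (δ c : ℝ) (hδ : 0 < δ) (r : ℝ) :
    HasDerivAt (fun r => 4*δ^2*(2*Real.log (δ^2+r^2)+2-c)/(δ^2+r^2))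
      (r * (8*δ^2/(δ^2+r^2)^2 * (-2*Real.log (δ^2+r^2) + c))) r := by
  have hpos : 0 < δ^2 + r^2 := by positivity
  have hne : δ^2 + r^2 ≠ 0 := hpos.ne'
  have hq : HasDerivAt (fun r : ℝ => δ^2 + r^2) (2*r) r := by
    simpa using (hasDerivAt_pow 2 r).const_add (δ^2)
  have hlog : HasDerivAt (fun r : ℝ => Real.log (δ^2+r^2)) (2*r/(δ^2+r^2)) r :=
    hq.log hne
  have hnum : HasDerivAt (fun r : ℝ => 4*δ^2*(2*Real.log (δ^2+r^2)+2-c))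
      (4*δ^2*(2*(2*r/(δ^2+r^2)))) r :=
    (((hlog.const_mul 2).add_const 2).sub_const c).const_mul (4*δ^2)
  have := hnum.div hq hne
  refine this.congr_deriv ?_
  field_simp
  ring

lemma ftc_integral (δ ε c : ℝ) (hδ : 0 < δ) (hε : 0 ≤ ε) :
    ∫ y in Set.Ioo 0 ε, y * (8*δ^2/(δ^2+y^2)^2 * (-2*Real.log (δ^2+y^2) + c))
      = 4*δ^2*(2*Real.log (δ^2+ε^2)+2-c)/(δ^2+ε^2) - 4*(2*Real.log (δ^2)+2-c) := by
  have hcont : Continuous (fun y : ℝ => y * (8*δ^2/(δ^2+y^2)^2 * (-2*Real.log (δ^2+y^2) + c))) := by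
    have h1 : Continuous (fun y : ℝ => δ^2 + y^2) := by continuity
    have h2 : Continuous (fun y : ℝ => Real.log (δ^2+y^2)) :=
      h1.log (fun y => by positivity)
    have h3 : ∀ y : ℝ, (δ^2+y^2)^2 ≠ 0 := fun y => by positivity
    exact continuous_id.mul ((continuous_const.div (h1.pow 2) h3).mul
      ((continuous_const.mul h2).add continuous_const :
        Continuous (fun y : ℝ => -2 * Real.log (δ^2+y^2) + c)))
  have key := intervalIntegral.integral_eq_sub_of_hasDerivAt
    (f := fun r => 4*δ^2*(2*Real.log (δ^2+r^2)+2-c)/(δ^2+r^2))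
    (fun r _ => hasDeriv_F δ c hδ r) (hcont.intervalIntegrable 0 ε)
  rw [← integral_Ioc_eq_integral_Ioo, ← intervalIntegral.integral_of_le hε, key]
  have hδ2 : (δ:ℝ)^2 ≠ 0 := by positivity
  rw [show (0:ℝ)^2 = 0 by ring, add_zero]
  field_simp

/-- Fix `ξ ∈ ℝ²`, `ε > 0` and `c ∈ ℝ`. Then there are `C > 0` and `δ₀ ∈ (0,1)` such that
for all `δ ∈ (0,δ₀)`,
`|∫_{B_ε(ξ)} e^{w_{δ,ξ}} (w_{δ,ξ} − log(8δ²) + c) dx − 8π(−2 log(δ²) + c − 2)| ≤ C δ² |log δ|`. -/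
theorem bubble_projected_integral (ξ : EuclideanSpace ℝ (Fin 2)) (ε : ℝ) (hε : 0 < ε)
    (c : ℝ) :
    ∃ C : ℝ, 0 < C ∧ ∃ δ₀ : ℝ, 0 < δ₀ ∧ δ₀ < 1 ∧
      ∀ δ : ℝ, 0 < δ → δ < δ₀ →
        |(∫ x in Metric.ball ξ ε,
              Real.exp (bubble δ ξ x) * (bubble δ ξ x - Real.log (8 * δ ^ 2) + c))
            - 8 * Real.pi * (-2 * Real.log (δ ^ 2) + c - 2)|
          ≤ C * δ ^ 2 * |Real.log δ| := by
  set K : ℝ := |Real.log (ε^2)| + |Real.log (ε^2+1)| with hK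
  set M : ℝ := 2*K + 2 + |c| with hM
  have hKnn : 0 ≤ K := by positivity
  have hMpos : 0 < M := by positivity
  have hC : 0 < 8 * π * M / (ε^2 * Real.log 2) := by
    have := Real.log_pos (by norm_num : (1:ℝ) < 2)
    positivity
  refine ⟨8 * π * M / (ε^2 * Real.log 2), hC, 1/2, by norm_num, by norm_num, ?_⟩
  intro δ hδ hδ2
  -- rewrite integrand as a radial function
  have hpt : ∀ x : EuclideanSpace ℝ (Fin 2),
      Real.exp (bubble δ ξ x) * (bubble δ ξ x - Real.log (8 * δ ^ 2) + c)
        = (fun r => 8*δ^2/(δ^2+r^2)^2 * (-2*Real.log (δ^2+r^2) + c)) ‖x - ξ‖ := by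
    intro x
    set r := ‖x - ξ‖
    have hpos : 0 < δ^2 + r^2 := by positivity
    have h8 : (0:ℝ) < 8 * δ^2 := by positivity
    have hb : bubble δ ξ x = Real.log (8*δ^2) - 2 * Real.log (δ^2+r^2) := by
      rw [bubble, Real.log_div h8.ne' (by positivity)]
      rw [Real.log_pow]
      push_cast
      ring
    rw [hb, show Real.exp (Real.log (8*δ^2) - 2*Real.log (δ^2+r^2))
        = Real.exp (Real.log (8*δ^2/(δ^2+r^2)^2)) by
      rw [Real.log_div h8.ne' (by positivity), Real.log_pow]; push_cast; ring_nf]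
    rw [Real.exp_log (by positivity)]
    ring
  have hint : (∫ x in Metric.ball ξ ε,
        Real.exp (bubble δ ξ x) * (bubble δ ξ x - Real.log (8 * δ ^ 2) + c))
      = ∫ x in Metric.ball ξ ε,
          (fun r => 8*δ^2/(δ^2+r^2)^2 * (-2*Real.log (δ^2+r^2) + c)) ‖x - ξ‖ :=
    setIntegral_congr_fun measurableSet_ball (fun x _ => hpt x)
  rw [hint, radial_integral ξ ε (fun r => 8*δ^2/(δ^2+r^2)^2 * (-2*Real.log (δ^2+r^2) + c))]
  rw [ftc_integral δ ε c hδ hε.le]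
  -- now an explicit expression
  have hde : 0 < δ^2 + ε^2 := by positivity
  have halg : 2 * π * (4*δ^2*(2*Real.log (δ^2+ε^2)+2-c)/(δ^2+ε^2)
        - 4*(2*Real.log (δ^2)+2-c))
      - 8 * π * (-2 * Real.log (δ ^ 2) + c - 2)
      = 8 * π * δ^2 * (2*Real.log (δ^2+ε^2)+2-c) / (δ^2+ε^2) := by
    field_simp
    ring
  rw [halg]
  -- bound
  have hLbound : |2*Real.log (δ^2+ε^2)+2-c| ≤ M := by
    have hlo : Real.log (ε^2) ≤ Real.log (δ^2+ε^2) :=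
      Real.log_le_log (by positivity) (by nlinarith)
    have hhi : Real.log (δ^2+ε^2) ≤ Real.log (ε^2+1) :=
      Real.log_le_log (by positivity) (by nlinarith)
    have habs : |Real.log (δ^2+ε^2)| ≤ K := by
      rw [abs_le]
      constructor
      · calc -K ≤ -|Real.log (ε^2)| := by simp [hK]
          _ ≤ Real.log (ε^2) := neg_abs_le _
          _ ≤ _ := hlo
      · calc Real.log (δ^2+ε^2) ≤ Real.log (ε^2+1) := hhi
          _ ≤ |Real.log (ε^2+1)| := le_abs_self _
          _ ≤ K := by simp [hK]
    calc |2*Real.log (δ^2+ε^2)+2-c| ≤ |2*Real.log (δ^2+ε^2)| + |2 - c| := by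
          have := abs_add_le (2*Real.log (δ^2+ε^2)) (2 - c)
          simpa [add_sub_assoc] using this
      _ ≤ 2*|Real.log (δ^2+ε^2)| + (2 + |c|) := by
          rw [abs_mul]
          have h1 : |2 - c| ≤ |(2:ℝ)| + |c| := abs_sub _ _
          simp only [abs_two] at h1 ⊢
          linarith
      _ ≤ 2*K + (2 + |c|) := by linarith
      _ = M := by rw [hM]; ring
  have hlog2 : Real.log 2 ≤ |Real.log δ| := by
    have h1 : Real.log δ ≤ Real.log (1/2) := Real.log_le_log hδ hδ2.le
    have h2 : Real.log (1/2) = -Real.log 2 := by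
      rw [one_div, Real.log_inv]
    have : Real.log 2 ≤ -Real.log δ := by rw [h2] at h1; linarith
    calc Real.log 2 ≤ -Real.log δ := this
      _ ≤ |Real.log δ| := neg_le_abs _
  have hlog2pos : 0 < Real.log 2 := Real.log_pos (by norm_num)
  have step1 : |8 * π * δ^2 * (2*Real.log (δ^2+ε^2)+2-c) / (δ^2+ε^2)|
      ≤ 8 * π * δ^2 * M / ε^2 := by
    rw [abs_div, abs_of_pos hde, div_le_div_iff₀ hde (by positivity)]
    have h1 : |8 * π * δ^2 * (2*Real.log (δ^2+ε^2)+2-c)|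
        = 8 * π * δ^2 * |2*Real.log (δ^2+ε^2)+2-c| := by
      rw [abs_mul, abs_of_pos (by positivity : (0:ℝ) < 8 * π * δ^2)]
    rw [h1]
    have h2 : ε^2 ≤ δ^2 + ε^2 := by nlinarith
    have h4 : |2*Real.log (δ^2+ε^2)+2-c| * ε^2 ≤ M * (δ^2+ε^2) :=
      mul_le_mul hLbound h2 (by positivity) hMpos.le
    nlinarith [mul_le_mul_of_nonneg_left h4 (by positivity : (0:ℝ) ≤ 8*π*δ^2)]
  calc |8 * π * δ^2 * (2*Real.log (δ^2+ε^2)+2-c) / (δ^2+ε^2)|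
      ≤ 8 * π * δ^2 * M / ε^2 := step1
    _ = (8 * π * M / (ε^2 * Real.log 2)) * δ^2 * Real.log 2 := by
        field_simp
    _ ≤ (8 * π * M / (ε^2 * Real.log 2)) * δ^2 * |Real.log δ| := by
        have hCpos : 0 ≤ (8 * π * M / (ε^2 * Real.log 2)) * δ^2 := by positivity
        exact mul_le_mul_of_nonneg_left hlog2 hCpos
end

section
/- Let U ⊂ ℂ be an open set, let ξ₁, ξ₂ ∈ U with ξ₁ ≠ ξ₂, let ω : U → ℂ be analytic on U, and let n₁, n₂, γ > 0 be real numbers. Define, for z ∈ U \ {ξ₁, ξ₂}, f(z) = (1/2)·( n₁/(4π(z−ξ₁)) − n₂/(4π(z−ξ₂)) + ω(z) )² − n₁/(4π(z−ξ₁)²) − n₂/(4πγ(z−ξ₂)²). If there exists an analytic function F : U → ℂ with F(z) = f(z) for all z ∈ U \ {ξ₁, ξ₂}, then ω(ξ₁) = 2/(γ(ξ₁ − ξ₂)). -/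
open Complex Filter Topology

lemma aux1 (a G D x : ℂ) (hx : x ≠ 0) :
    x ^ 2 * ((1/2) * (a/x + G) ^ 2 - a/x^2 - D)
    = a^2/2 - a + x * (a * G) + x^2 * (G^2/2 - D) := by
  field_simp
  ring

lemma aux2 (b c H E y : ℂ) (hy : y ≠ 0) :
    y ^ 2 * ((1/2) * (H - b/y) ^ 2 - E - c/y^2)
    = b^2/2 - c + y * (-(b * H)) + y^2 * (H^2/2 - E) := by
  field_simp
  ring

lemma aux3 (a G D x : ℂ) (hx : x ≠ 0) :
    x * ((1/2) * (a/x + G) ^ 2 - a/x^2 - D)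
    = (a^2/2 - a)/x + a * G + x * (G^2/2 - D) := by
  field_simp
  ring

set_option maxHeartbeats 1600000 in
/-- Vanishing of the first-order pole at `ξ₁`. Let `U ⊂ ℂ` be open, `ξ₁ ≠ ξ₂` points of `U`,
`ω` analytic on `U`, and `n₁, n₂, γ > 0` real. If the function
`f(z) = (1/2)(n₁/(4π(z−ξ₁)) − n₂/(4π(z−ξ₂)) + ω(z))² − n₁/(4π(z−ξ₁)²) − n₂/(4πγ(z−ξ₂)²)`
extends to an analytic function `F` on all of `U`, then `ω(ξ₁) = 2/(γ(ξ₁ − ξ₂))`. -/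
theorem residue_balancing (U : Set ℂ) (hU : IsOpen U) (ξ₁ ξ₂ : ℂ)
    (hξ₁ : ξ₁ ∈ U) (hξ₂ : ξ₂ ∈ U) (hne : ξ₁ ≠ ξ₂)
    (ω : ℂ → ℂ) (hω : DifferentiableOn ℂ ω U)
    (n₁ n₂ γ : ℝ) (hn₁ : 0 < n₁) (hn₂ : 0 < n₂) (hγ : 0 < γ)
    (F : ℂ → ℂ) (hF : DifferentiableOn ℂ F U)
    (hFf : ∀ z ∈ U \ {ξ₁, ξ₂},
      F z = (1 / 2) * ((n₁ : ℂ) / (4 * Real.pi * (z - ξ₁))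
              - (n₂ : ℂ) / (4 * Real.pi * (z - ξ₂)) + ω z) ^ 2
            - (n₁ : ℂ) / (4 * Real.pi * (z - ξ₁) ^ 2)
            - (n₂ : ℂ) / (4 * Real.pi * γ * (z - ξ₂) ^ 2)) :
    ω ξ₁ = 2 / ((γ : ℂ) * (ξ₁ - ξ₂)) := by
  set S : Set ℂ := U \ {ξ₁, ξ₂} with hSdef
  have hmem : ∀ z ∈ S, z ∈ U ∧ z ≠ ξ₁ ∧ z ≠ ξ₂ := by
    intro z hz
    simp only [hSdef, Set.mem_diff, Set.mem_insert_iff, Set.mem_singleton_iff] at hz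
    tauto
  have hSsub : S ⊆ U := Set.diff_subset
  have hπ : (Real.pi : ℂ) ≠ 0 := by exact_mod_cast Real.pi_ne_zero
  have h4π : (4 : ℂ) * Real.pi ≠ 0 := by
    simp [hπ]
  have hγ0 : (γ : ℂ) ≠ 0 := by exact_mod_cast hγ.ne'
  have h12 : ξ₁ - ξ₂ ≠ 0 := sub_ne_zero.mpr hne
  have h21 : ξ₂ - ξ₁ ≠ 0 := sub_ne_zero.mpr (Ne.symm hne)
  set A : ℂ := (n₁ : ℂ) / (4 * Real.pi) with hAdef
  set B : ℂ := (n₂ : ℂ) / (4 * Real.pi) with hBdef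
  set C : ℂ := (n₂ : ℂ) / (4 * Real.pi * γ) with hCdef
  have hA0 : A ≠ 0 := div_ne_zero (by exact_mod_cast hn₁.ne') h4π
  have hB0 : B ≠ 0 := div_ne_zero (by exact_mod_cast hn₂.ne') h4π
  -- punctured neighborhood filters
  have hS1 : 𝓝[S] ξ₁ = 𝓝[≠] ξ₁ := by
    have hV : U ∩ {ξ₂}ᶜ ∈ 𝓝 ξ₁ :=
      Filter.inter_mem (hU.mem_nhds hξ₁) (IsOpen.mem_nhds isClosed_singleton.isOpen_compl (by simp [hne]))
    rw [show S = {ξ₁}ᶜ ∩ (U ∩ {ξ₂}ᶜ) by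
      ext z; simp only [hSdef, Set.mem_diff, Set.mem_insert_iff, Set.mem_singleton_iff,
        Set.mem_inter_iff, Set.mem_compl_iff]; tauto]
    exact nhdsWithin_inter_of_mem' (mem_nhdsWithin_of_mem_nhds hV)
  have hS2 : 𝓝[S] ξ₂ = 𝓝[≠] ξ₂ := by
    have hV : U ∩ {ξ₁}ᶜ ∈ 𝓝 ξ₂ :=
      Filter.inter_mem (hU.mem_nhds hξ₂) (IsOpen.mem_nhds isClosed_singleton.isOpen_compl (by simp [hne.symm]))
    rw [show S = {ξ₂}ᶜ ∩ (U ∩ {ξ₁}ᶜ) by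
      ext z; simp only [hSdef, Set.mem_diff, Set.mem_insert_iff, Set.mem_singleton_iff,
        Set.mem_inter_iff, Set.mem_compl_iff]; tauto]
    exact nhdsWithin_inter_of_mem' (mem_nhdsWithin_of_mem_nhds hV)
  haveI hNB1 : (𝓝[S] ξ₁).NeBot := by rw [hS1]; infer_instance
  haveI hNB2 : (𝓝[S] ξ₂).NeBot := by rw [hS2]; infer_instance
  have hSev1 : ∀ᶠ z in 𝓝[S] ξ₁, z ∈ S := eventually_mem_nhdsWithin
  have hSev2 : ∀ᶠ z in 𝓝[S] ξ₂, z ∈ S := eventually_mem_nhdsWithin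
  -- tendsto of (z-ξ)^k * F z to 0
  have hFc1 : ContinuousWithinAt F S ξ₁ := ((hF.continuousOn) ξ₁ hξ₁).mono hSsub
  have hFc2 : ContinuousWithinAt F S ξ₂ := ((hF.continuousOn) ξ₂ hξ₂).mono hSsub
  have hωc1 : ContinuousWithinAt ω S ξ₁ := ((hω.continuousOn) ξ₁ hξ₁).mono hSsub
  have T0 : ∀ (k : ℕ), k ≠ 0 → ∀ (ξ : ℂ), ContinuousWithinAt F S ξ →
      Tendsto (fun z => (z - ξ) ^ k * F z) (𝓝[S] ξ) (𝓝 0) := by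
    intro k hk ξ hc
    have h1 : Tendsto (fun z => (z - ξ) ^ k) (𝓝[S] ξ) (𝓝 0) := by
      have : ContinuousWithinAt (fun z => (z - ξ) ^ k) S ξ :=
        ((continuous_id.sub continuous_const).pow k).continuousWithinAt
      simpa [zero_pow hk] using this.tendsto
    simpa using h1.mul hc.tendsto
  -- g z = -B/(z-ξ₂) + ω z, analytic near ξ₁
  have hf' : ∀ z ∈ S, F z = (1/2) * (A/(z-ξ₁) - B/(z-ξ₂) + ω z) ^ 2
      - A/(z-ξ₁)^2 - C/(z-ξ₂)^2 := by
    intro z hz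
    rw [hFf z hz, hAdef, hBdef, hCdef, div_div]
    simp only [div_div]
  set g : ℂ → ℂ := fun z => -(B / (z - ξ₂)) + ω z with hgdef
  have hgc : ContinuousWithinAt g S ξ₁ := by
    apply ContinuousWithinAt.add _ hωc1
    apply ContinuousWithinAt.neg
    exact ContinuousWithinAt.div continuousWithinAt_const
      ((continuous_id.sub continuous_const).continuousWithinAt) h12
  -- Step 1: second order coefficient at ξ₁
  have key1 : ∀ z ∈ S, (z - ξ₁) ^ 2 * F z
      = A ^ 2 / 2 - A + (z - ξ₁) * (A * g z)
        + (z - ξ₁) ^ 2 * ((g z) ^ 2 / 2 - C / (z - ξ₂) ^ 2) := by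
    intro z hz
    obtain ⟨hzU, hz1, hz2⟩ := hmem z hz
    have hz1' : z - ξ₁ ≠ 0 := sub_ne_zero.mpr hz1
    have hz2' : z - ξ₂ ≠ 0 := sub_ne_zero.mpr hz2
    rw [hf' z hz]
    have h := aux1 A (-(B/(z-ξ₂)) + ω z) (C/(z-ξ₂)^2) (z-ξ₁) hz1'
    simp only [hgdef]
    linear_combination h
  have TA : Tendsto (fun z => (z - ξ₁) ^ 2 * F z) (𝓝[S] ξ₁) (𝓝 (A ^ 2 / 2 - A)) := by
    have hc : ContinuousWithinAt (fun z => A ^ 2 / 2 - A + (z - ξ₁) * (A * g z)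
        + (z - ξ₁) ^ 2 * ((g z) ^ 2 / 2 - C / (z - ξ₂) ^ 2)) S ξ₁ := by
      apply ContinuousWithinAt.add
      apply ContinuousWithinAt.add continuousWithinAt_const
      · exact ((continuous_id.sub continuous_const).continuousWithinAt).mul
          (continuousWithinAt_const.mul hgc)
      · apply ContinuousWithinAt.mul
          (((continuous_id.sub continuous_const).pow 2).continuousWithinAt)
        apply ContinuousWithinAt.sub ((hgc.pow 2).div_const 2)
        apply ContinuousWithinAt.div continuousWithinAt_const
          (((continuous_id.sub continuous_const).pow 2).continuousWithinAt)
        simp [h12, hπ]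
    have := hc.tendsto
    simp only [sub_self, zero_pow, zero_mul, add_zero, ne_eq, OfNat.ofNat_ne_zero, not_false_eq_true] at this
    refine Tendsto.congr' ?_ this
    filter_upwards [hSev1] with z hz
    exact (key1 z hz).symm
  have hA2 : A ^ 2 / 2 - A = 0 := tendsto_nhds_unique TA (T0 2 two_ne_zero ξ₁ hFc1)
  -- Step 2: second order coefficient at ξ₂
  set h : ℂ → ℂ := fun z => A / (z - ξ₁) + ω z with hhdef
  have hhc : ContinuousWithinAt h S ξ₂ := by
    apply ContinuousWithinAt.add _ (((hω.continuousOn) ξ₂ hξ₂).mono hSsub)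
    exact ContinuousWithinAt.div continuousWithinAt_const
      ((continuous_id.sub continuous_const).continuousWithinAt) h21
  have key2 : ∀ z ∈ S, (z - ξ₂) ^ 2 * F z
      = B ^ 2 / 2 - C + (z - ξ₂) * (-(B * h z))
        + (z - ξ₂) ^ 2 * ((h z) ^ 2 / 2 - A / (z - ξ₁) ^ 2) := by
    intro z hz
    obtain ⟨hzU, hz1, hz2⟩ := hmem z hz
    have hz1' : z - ξ₁ ≠ 0 := sub_ne_zero.mpr hz1
    have hz2' : z - ξ₂ ≠ 0 := sub_ne_zero.mpr hz2
    rw [hf' z hz]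
    have h2 := aux2 B C (A/(z-ξ₁) + ω z) (A/(z-ξ₁)^2) (z-ξ₂) hz2'
    simp only [hhdef]
    linear_combination h2
  have TB : Tendsto (fun z => (z - ξ₂) ^ 2 * F z) (𝓝[S] ξ₂) (𝓝 (B ^ 2 / 2 - C)) := by
    have hc : ContinuousWithinAt (fun z => B ^ 2 / 2 - C + (z - ξ₂) * (-(B * h z))
        + (z - ξ₂) ^ 2 * ((h z) ^ 2 / 2 - A / (z - ξ₁) ^ 2)) S ξ₂ := by
      apply ContinuousWithinAt.add
      apply ContinuousWithinAt.add continuousWithinAt_const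
      · exact ((continuous_id.sub continuous_const).continuousWithinAt).mul
          (continuousWithinAt_const.mul hhc).neg
      · apply ContinuousWithinAt.mul
          (((continuous_id.sub continuous_const).pow 2).continuousWithinAt)
        apply ContinuousWithinAt.sub ((hhc.pow 2).div_const 2)
        apply ContinuousWithinAt.div continuousWithinAt_const
          (((continuous_id.sub continuous_const).pow 2).continuousWithinAt)
        simp [h21, hπ]
    have := hc.tendsto
    simp only [sub_self, zero_pow, zero_mul, add_zero, ne_eq, OfNat.ofNat_ne_zero, not_false_eq_true] at this
    refine Tendsto.congr' ?_ this
    filter_upwards [hSev2] with z hz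
    exact (key2 z hz).symm
  have hB2 : B ^ 2 / 2 - C = 0 := tendsto_nhds_unique TB (T0 2 two_ne_zero ξ₂ hFc2)
  -- Step 3: residue at ξ₁
  have key3 : ∀ z ∈ S, (z - ξ₁) * F z
      = (A ^ 2 / 2 - A) / (z - ξ₁) + A * g z
        + (z - ξ₁) * ((g z) ^ 2 / 2 - C / (z - ξ₂) ^ 2) := by
    intro z hz
    obtain ⟨hzU, hz1, hz2⟩ := hmem z hz
    have hz1' : z - ξ₁ ≠ 0 := sub_ne_zero.mpr hz1
    have hz2' : z - ξ₂ ≠ 0 := sub_ne_zero.mpr hz2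
    rw [hf' z hz]
    have h3 := aux3 A (-(B/(z-ξ₂)) + ω z) (C/(z-ξ₂)^2) (z-ξ₁) hz1'
    simp only [hgdef]
    linear_combination h3
  have TR : Tendsto (fun z => (z - ξ₁) * F z) (𝓝[S] ξ₁) (𝓝 (A * g ξ₁)) := by
    have hc : ContinuousWithinAt (fun z => A * g z
        + (z - ξ₁) * ((g z) ^ 2 / 2 - C / (z - ξ₂) ^ 2)) S ξ₁ := by
      apply ContinuousWithinAt.add (continuousWithinAt_const.mul hgc)
      apply ContinuousWithinAt.mul ((continuous_id.sub continuous_const).continuousWithinAt)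
      apply ContinuousWithinAt.sub ((hgc.pow 2).div_const 2)
      apply ContinuousWithinAt.div continuousWithinAt_const
        (((continuous_id.sub continuous_const).pow 2).continuousWithinAt)
      simp [h12, hπ]
    have := hc.tendsto
    simp only [sub_self, zero_mul, add_zero] at this
    refine Tendsto.congr' ?_ this
    filter_upwards [hSev1] with z hz
    rw [key3 z hz, hA2]
    simp
  have hres : A * g ξ₁ = 0 := tendsto_nhds_unique TR (T0 1 one_ne_zero ξ₁ hFc1 |>.congr (by
    intro z; rw [pow_one]))
  have hg0 : g ξ₁ = 0 := by
    rcases mul_eq_zero.mp hres with h | h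
    · exact absurd h hA0
    · exact h
  -- conclude: ω ξ₁ = B/(ξ₁ - ξ₂), and B = 2/γ from hB2
  have h' := hg0
  simp only [hgdef] at h'
  have hω₁ : ω ξ₁ = B / (ξ₁ - ξ₂) := by linear_combination h'
  have hCB : C = B / γ := by rw [hCdef, hBdef, div_div]
  have hBval : B = 2 / γ := by
    have hz : B * (B - 2 / γ) = 0 := by linear_combination 2 * hB2 + 2 * hCB
    rcases mul_eq_zero.mp hz with h | h
    · exact absurd h hB0
    · exact sub_eq_zero.mp h
  rw [hω₁, hBval, div_div]
end
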